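/- Every doubly nonnegative real matrix of rank at most 2 is completely positive. That is, if M is an n×n real symmetric matrix that is positive semidefinite, has all entries nonnegative, and has rank ≤ 2, then M can be written as a finite sum of matrices x xᵀ with x ∈ ℝⁿ having nonnegative entries. -/

import Mathlib

namespace CPaux


/-- dot product on ℝ × ℝ -/
def pdot (p q : ℝ × ℝ) : ℝ := p.1 * q.1 + p.2 * q.2

/-- (unnormalized) rotation taking w to the positive x-axis -/
def rot (w p : ℝ × ℝ) : ℝ × ℝ := (w.1 * p.1 + w.2 * p.2, w.1 * p.2 - w.2 * p.1)

lemma pdot_rot (w p q : ℝ × ℝ) : pdot (rot w p) (rot w q) = pdot w w * pdot p q := by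
  simp only [pdot, rot]; ring

lemma pdot_self_pos {w : ℝ × ℝ} (hw : w ≠ 0) : 0 < pdot w w := by
  rcases eq_or_ne w.1 0 with h1 | h1
  · have h2 : w.2 ≠ 0 := by
      intro h2; exact hw (Prod.ext h1 h2)
    have := mul_self_pos.2 h2
    simp only [pdot, h1]; nlinarith
  · have := mul_self_pos.2 h1
    simp only [pdot]; nlinarith

/-- rotate taking w to the positive x-axis, normalized -/
noncomputable def nrot (w p : ℝ × ℝ) : ℝ × ℝ := (Real.sqrt (pdot w w))⁻¹ • rot w p

lemma pdot_smul (a : ℝ) (p q : ℝ × ℝ) : pdot (a • p) (a • q) = a * a * pdot p q := by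
  simp only [pdot, Prod.smul_fst, Prod.smul_snd, smul_eq_mul]; ring

lemma pdot_nrot {w : ℝ × ℝ} (hw : w ≠ 0) (p q : ℝ × ℝ) :
    pdot (nrot w p) (nrot w q) = pdot p q := by
  have hs : 0 < pdot w w := pdot_self_pos hw
  have h1 : Real.sqrt (pdot w w) * Real.sqrt (pdot w w) = pdot w w :=
    Real.mul_self_sqrt hs.le
  rw [nrot, nrot, pdot_smul, pdot_rot, ← mul_assoc, ← mul_inv, h1,
    inv_mul_cancel₀ hs.ne', one_mul]

lemma nrot_fst {w : ℝ × ℝ} (p : ℝ × ℝ) (h : 0 ≤ pdot w p) : 0 ≤ (nrot w p).1 := by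
  have : (0:ℝ) ≤ (Real.sqrt (pdot w w))⁻¹ := by positivity
  simpa only [nrot, Prod.smul_fst, smul_eq_mul, rot] using mul_nonneg this (by simpa [pdot] using h)

lemma nrot_snd {w : ℝ × ℝ} (p : ℝ × ℝ) (h : 0 ≤ w.1 * p.2 - w.2 * p.1) : 0 ≤ (nrot w p).2 := by
  have : (0:ℝ) ≤ (Real.sqrt (pdot w w))⁻¹ := by positivity
  simpa only [nrot, Prod.smul_snd, smul_eq_mul, rot] using mul_nonneg this h

/-- Any finite family of planar vectors with pairwise nonnegative inner products can be
rotated into the closed first quadrant. -/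
lemma quadrant {m : ℕ} (b : Fin m → ℝ × ℝ) (h : ∀ i j, 0 ≤ pdot (b i) (b j)) :
    ∃ u : Fin m → ℝ × ℝ, (∀ i, 0 ≤ (u i).1 ∧ 0 ≤ (u i).2) ∧
      ∀ i j, pdot (u i) (u j) = pdot (b i) (b j) := by
  by_cases hz : ∀ i, b i = 0
  · exact ⟨b, fun i => by rw [hz i]; exact ⟨le_refl 0, le_refl 0⟩, fun i j => rfl⟩
  push_neg at hz
  obtain ⟨i₀, hi₀⟩ := hz
  -- first rotation: align b i₀ with the positive x-axis
  set c : Fin m → ℝ × ℝ := fun i => nrot (b i₀) (b i) with hc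
  have hcd : ∀ i j, pdot (c i) (c j) = pdot (b i) (b j) := fun i j => pdot_nrot hi₀ _ _
  have hcd0 : ∀ i j, 0 ≤ pdot (c i) (c j) := fun i j => (hcd i j) ▸ h i j
  have hc1 : ∀ i, 0 ≤ (c i).1 := fun i => nrot_fst _ (h i₀ i)
  clear_value c
  by_cases hA : ∀ i, 0 ≤ (c i).2
  · exact ⟨c, fun i => ⟨hc1 i, hA i⟩, hcd⟩
  push_neg at hA
  obtain ⟨l, hl⟩ := hA
  by_cases hB : ∀ i, (c i).2 ≤ 0
  · -- rotate by 90 degrees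
    refine ⟨fun i => (-(c i).2, (c i).1), fun i => ⟨by simpa using neg_nonneg.2 (hB i), hc1 i⟩, fun i j => ?_⟩
    rw [← hcd i j]; simp only [pdot]; ring
  push_neg at hB
  obtain ⟨p, hp⟩ := hB
  -- mixed case
  have hpos : ∀ i, (c i).2 < 0 → 0 < (c i).1 := by
    intro i hi
    have hd := hcd0 i p
    simp only [pdot] at hd
    nlinarith [hc1 i, hc1 p]
  -- pick the vector of most negative angle
  set T : Finset (Fin m) := Finset.univ.filter (fun i => (c i).2 < 0) with hT
  have hlT : l ∈ T := by simp [hT, hl]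
  obtain ⟨w, hwT, hwmax⟩ := Finset.exists_max_image T (fun i => -(c i).2 / (c i).1) ⟨l, hlT⟩
  have hw2 : (c w).2 < 0 := by simpa [hT] using hwT
  have hw1 : 0 < (c w).1 := hpos w hw2
  have hwne : c w ≠ 0 := by
    intro hcw
    rw [hcw] at hw2; simp at hw2
  refine ⟨fun i => nrot (c w) (c i), fun i => ⟨nrot_fst _ (hcd0 w i), nrot_snd _ ?_⟩,
    fun i j => by rw [pdot_nrot hwne, hcd]⟩
  rcases le_or_gt 0 ((c i).2) with hi2 | hi2
  · nlinarith [hc1 i]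
  · have hi1 : 0 < (c i).1 := hpos i hi2
    have hiT : i ∈ T := by simp [hT, hi2]
    have := hwmax i hiT
    rw [div_le_div_iff₀ hi1 hw1] at this
    nlinarith




lemma exists_gram {n : ℕ} (M : Matrix (Fin n) (Fin n) ℝ)
    (hPSD : M.PosSemidef) (hrank : M.rank ≤ 2) :
    ∃ b : Fin n → ℝ × ℝ, ∀ i j, M i j = pdot (b i) (b j) := by
  classical
  have hM : M.IsHermitian := hPSD.1
  set μ := hM.eigenvalues with hμ
  set U : Matrix (Fin n) (Fin n) ℝ := (hM.eigenvectorUnitary : Matrix (Fin n) (Fin n) ℝ) with hU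
  have key : ∀ i j, M i j = ∑ k, U i k * μ k * U j k := by
    intro i j
    conv_lhs => rw [hM.spectral_theorem, Unitary.conjStarAlgAut_apply]
    rw [Matrix.mul_apply]
    refine Finset.sum_congr rfl fun k _ => ?_
    rw [Matrix.mul_apply]
    simp only [Matrix.diagonal_apply, Function.comp_apply, RCLike.ofReal_real_eq_id, id_eq,
      mul_ite, mul_zero, Finset.sum_ite_eq, Finset.mem_univ, if_pos, Matrix.star_apply,
      star_trivial, hU, Matrix.IsHermitian.eigenvectorUnitary_apply, hμ, Finset.sum_ite_eq',
      Finset.mem_univ, if_true]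
  -- the set of nonzero eigenvalues has at most two elements
  have hcard : Fintype.card {k // μ k ≠ 0} ≤ 2 := by
    have h := hM.rank_eq_card_non_zero_eigs
    rw [h] at hrank
    exact hrank
  obtain ⟨g⟩ : Nonempty ({k // μ k ≠ 0} ↪ Fin 2) :=
    Function.Embedding.nonempty_of_card_le (by simpa using hcard)
  set gg : Fin n → Fin 2 := fun k => if h : μ k ≠ 0 then g ⟨k, h⟩ else 0 with hgg
  set S : Finset (Fin n) := Finset.univ.filter (fun k => μ k ≠ 0) with hS
  have hginj : ∀ k ∈ S, ∀ k' ∈ S, gg k = gg k' → k = k' := by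
    intro k hk k' hk' he
    simp only [hS, Finset.mem_filter] at hk hk'
    simp only [hgg, dif_pos hk.2, dif_pos hk'.2] at he
    exact congrArg Subtype.val (g.injective he)
  set c : Fin n → Fin n → ℝ := fun k i => Real.sqrt (μ k) * U i k with hc
  refine ⟨fun i => (∑ k ∈ S, if gg k = 0 then c k i else 0,
                    ∑ k ∈ S, if gg k = 1 then c k i else 0), fun i j => ?_⟩
  have step1 : M i j = ∑ k ∈ S, c k i * c k j := by
    rw [key i j, ← Finset.sum_subset (Finset.subset_univ S)]
    · refine Finset.sum_congr rfl fun k hk => ?_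
      have hk' : μ k ≠ 0 := by simpa [hS] using hk
      have h0 : 0 ≤ μ k := hPSD.eigenvalues_nonneg k
      simp only [hc]
      rw [show Real.sqrt (μ k) * U i k * (Real.sqrt (μ k) * U j k)
            = Real.sqrt (μ k) * Real.sqrt (μ k) * (U i k * U j k) by ring,
        Real.mul_self_sqrt h0]
      ring
    · intro k _ hk
      have : μ k = 0 := by by_contra hne; exact hk (by simp [hS, hne])
      simp [this]
  rw [step1]
  simp only [pdot, Finset.sum_mul_sum, ← Finset.sum_add_distrib]
  refine Finset.sum_congr rfl fun k hk => ?_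
  symm
  refine (Finset.sum_eq_single_of_mem k hk ?_).trans ?_
  · intro k' hk' hne
    have hggne : gg k' ≠ gg k := fun he => hne (hginj k' hk' k hk he)
    rcases eq_or_ne (gg k) 0 with h0 | h0
    · have ha : ¬ gg k' = 0 := fun he => hggne (he.trans h0.symm)
      have hb : ¬ gg k = 1 := by rw [h0]; exact (by decide : (0 : Fin 2) ≠ 1)
      rw [if_neg ha, if_neg hb]
      ring
    · have h1 : gg k = 1 := Fin.eq_one_of_ne_zero _ h0
      have ha : ¬ gg k' = 1 := fun he => hggne (he.trans h1.symm)
      rw [if_neg h0, if_neg ha]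
      ring
  · rcases eq_or_ne (gg k) 0 with h0 | h0
    · have h1 : gg k ≠ 1 := by rw [h0]; exact (by decide : (0 : Fin 2) ≠ 1)
      rw [if_pos h0, if_pos h0, if_neg h1]
      ring
    · have h1 : gg k = 1 := Fin.eq_one_of_ne_zero _ h0
      rw [if_neg h0, if_pos h1, if_pos h1]
      ring


end CPaux

/-- Every doubly nonnegative real matrix of rank at most 2 is completely
positive: it is a finite sum of `x xᵀ` with `x` entrywise nonnegative. -/
theorem doublyNonneg_rank_two_completelyPositive {n : ℕ}
    (M : Matrix (Fin n) (Fin n) ℝ)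
    (hPSD : M.PosSemidef) (hNonneg : ∀ i j, 0 ≤ M i j) (hrank : M.rank ≤ 2) :
    ∃ (k : ℕ) (x : Fin k → (Fin n → ℝ)),
      (∀ i j, 0 ≤ x i j) ∧ M = ∑ i, Matrix.vecMulVec (x i) (x i) := by
  classical
  obtain ⟨b, hb⟩ := CPaux.exists_gram M hPSD hrank
  obtain ⟨u, hu, hud⟩ := CPaux.quadrant b (fun i j => (hb i j) ▸ hNonneg i j)
  refine ⟨2, ![fun i => (u i).1, fun i => (u i).2], ?_, ?_⟩
  · intro i j
    fin_cases i
    · exact (hu j).1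
    · exact (hu j).2
  · ext i j
    rw [hb i j, ← hud i j]
    simp [Matrix.sum_apply, Fin.sum_univ_two, Matrix.vecMulVec_apply, CPaux.pdot]
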